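/- If P is a set of PBW filtered quadratic relations, then ⟨P⟩ ∩ F^2(T) = T^0 P T^0, the T^0-bimodule generated by P. -/

import Mathlib

open DirectSum

/-- The `m`-th filtered component of a graded algebra. -/
def filt {k T : Type*} [CommSemiring k] [Ring T] [Algebra k T]
    (𝒜 : ℕ → Submodule k T) (m : ℕ) : Submodule k T :=
  ⨆ i ≤ m, 𝒜 i

/-- The leading homogeneous part of an element of a graded algebra. -/
noncomputable def LH {k T : Type*} [CommSemiring k] [Ring T] [Algebra k T]
    (𝒜 : ℕ → Submodule k T) [GradedAlgebra 𝒜] (f : T) : T :=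
  GradedAlgebra.proj 𝒜 (sSup {i | GradedAlgebra.proj 𝒜 i f ≠ 0}) f

/-- The two-sided ideal generated by a subset, as a `k`-submodule. -/
def twoSidedSpan (k : Type*) {T : Type*} [CommSemiring k] [Ring T] [Algebra k T]
    (P : Set T) : Submodule k T :=
  Submodule.span k {x | ∃ a b : T, ∃ p ∈ P, x = a * p * b}

/-- The `T⁰`-bimodule generated by a subset `P`, i.e. `T⁰ P T⁰`. -/
def bimodSpan (k : Type*) {T : Type*} [CommSemiring k] [Ring T] [Algebra k T]
    (𝒜 : ℕ → Submodule k T) (P : Set T) : Submodule k T :=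
  Submodule.span k {x | ∃ a ∈ 𝒜 0, ∃ p ∈ P, ∃ b ∈ 𝒜 0, x = a * p * b}

section aux
variable {k T : Type*} [CommSemiring k] [Ring T] [Algebra k T]
    (𝒜 : ℕ → Submodule k T) [GradedAlgebra 𝒜]

lemma proj_mul_left0 {a : T} (ha : a ∈ 𝒜 0) (z : T) (n : ℕ) :
    GradedAlgebra.proj 𝒜 n (a * z) = a * GradedAlgebra.proj 𝒜 n z := by
  induction z using DirectSum.Decomposition.inductionOn 𝒜 with
  | zero => simp
  | @homogeneous i m =>
    have hm : a * (m : T) ∈ 𝒜 i := by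
      simpa using SetLike.mul_mem_graded ha m.2
    by_cases h : i = n
    · subst h
      rw [GradedAlgebra.proj_apply, GradedAlgebra.proj_apply,
        DirectSum.decompose_of_mem_same 𝒜 hm, DirectSum.decompose_of_mem_same 𝒜 m.2]
    · rw [GradedAlgebra.proj_apply, GradedAlgebra.proj_apply,
        DirectSum.decompose_of_mem_ne 𝒜 hm h, DirectSum.decompose_of_mem_ne 𝒜 m.2 h, mul_zero]
  | add x y hx hy => rw [mul_add, map_add, hx, hy, map_add, mul_add]

lemma proj_mul_right0 {b : T} (hb : b ∈ 𝒜 0) (z : T) (n : ℕ) :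
    GradedAlgebra.proj 𝒜 n (z * b) = GradedAlgebra.proj 𝒜 n z * b := by
  induction z using DirectSum.Decomposition.inductionOn 𝒜 with
  | zero => simp
  | @homogeneous i m =>
    have hm : (m : T) * b ∈ 𝒜 i := by
      simpa using SetLike.mul_mem_graded m.2 hb
    by_cases h : i = n
    · subst h
      rw [GradedAlgebra.proj_apply, GradedAlgebra.proj_apply,
        DirectSum.decompose_of_mem_same 𝒜 hm, DirectSum.decompose_of_mem_same 𝒜 m.2]
    · rw [GradedAlgebra.proj_apply, GradedAlgebra.proj_apply,
        DirectSum.decompose_of_mem_ne 𝒜 hm h, DirectSum.decompose_of_mem_ne 𝒜 m.2 h, zero_mul]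
  | add x y hx hy => rw [add_mul, map_add, hx, hy, map_add, add_mul]

/-- Membership in the filtration in terms of vanishing projections. -/
lemma mem_filt_iff (m : ℕ) (x : T) :
    x ∈ filt 𝒜 m ↔ ∀ i, m < i → GradedAlgebra.proj 𝒜 i x = 0 := by
  classical
  constructor
  · intro hx i hi
    have : filt 𝒜 m ≤ LinearMap.ker (GradedAlgebra.proj 𝒜 i) := by
      apply iSup₂_le
      intro j hj y hy
      have : j ≠ i := by omega
      simp only [LinearMap.mem_ker, GradedAlgebra.proj_apply]
      exact DirectSum.decompose_of_mem_ne 𝒜 hy this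
    exact this hx
  · intro h
    have hx := DirectSum.sum_support_decompose 𝒜 x
    rw [← hx]
    apply Submodule.sum_mem
    intro i hi
    have hine : GradedAlgebra.proj 𝒜 i x ≠ 0 := by
      simpa [GradedAlgebra.proj_apply, Submodule.coe_eq_zero.not.symm] using
        DFinsupp.mem_support_iff.mp hi
    have him : i ≤ m := by
      by_contra hc
      exact hine (h i (by omega))
    have : (𝒜 i : Submodule k T) ≤ filt 𝒜 m := le_iSup₂ (f := fun i (_ : i ≤ m) => 𝒜 i) i him
    exact this (SetLike.coe_mem _)

/-- Low projections vanish on `a * q * b` when `q` is homogeneous of degree 2. -/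
lemma proj_low_aqb {q : T} (hq : q ∈ 𝒜 2) {d : ℕ} (hd : d < 2) (a b : T) :
    GradedAlgebra.proj 𝒜 d (a * q * b) = 0 := by
  induction a using DirectSum.Decomposition.inductionOn 𝒜 with
  | zero => simp
  | @homogeneous i m =>
    induction b using DirectSum.Decomposition.inductionOn 𝒜 with
    | zero => simp
    | @homogeneous j m' =>
      have hmem : (m : T) * q * (m' : T) ∈ 𝒜 (i + 2 + j) :=
        SetLike.mul_mem_graded (SetLike.mul_mem_graded m.2 hq) m'.2
      have : i + 2 + j ≠ d := by omega
      rw [GradedAlgebra.proj_apply, DirectSum.decompose_of_mem_ne 𝒜 hmem this]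
    | add x y hx hy => rw [mul_add, map_add, hx, hy, add_zero]
  | add x y hx hy => rw [add_mul, add_mul, map_add, hx, hy, add_zero]

/-- Degree-2 projection of `a * q * b` when `q` is homogeneous of degree 2. -/
lemma proj_two_aqb {q : T} (hq : q ∈ 𝒜 2) (a b : T) :
    GradedAlgebra.proj 𝒜 2 (a * q * b) =
      GradedAlgebra.proj 𝒜 0 a * q * GradedAlgebra.proj 𝒜 0 b := by
  induction a using DirectSum.Decomposition.inductionOn 𝒜 with
  | zero => simp
  | @homogeneous i m =>
    induction b using DirectSum.Decomposition.inductionOn 𝒜 with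
    | zero => simp
    | @homogeneous j m' =>
      have hmem : (m : T) * q * (m' : T) ∈ 𝒜 (i + 2 + j) :=
        SetLike.mul_mem_graded (SetLike.mul_mem_graded m.2 hq) m'.2
      by_cases hi : i = 0
      · subst hi
        by_cases hj : j = 0
        · subst hj
          rw [GradedAlgebra.proj_apply, GradedAlgebra.proj_apply, GradedAlgebra.proj_apply,
            DirectSum.decompose_of_mem_same 𝒜 (show (m:T)*q*(m':T) ∈ 𝒜 2 by simpa using hmem),
            DirectSum.decompose_of_mem_same 𝒜 m.2, DirectSum.decompose_of_mem_same 𝒜 m'.2]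
        · rw [GradedAlgebra.proj_apply (𝒜 := 𝒜) 2,
            DirectSum.decompose_of_mem_ne 𝒜 hmem (by omega),
            GradedAlgebra.proj_apply (𝒜 := 𝒜) 0 (m' : T),
            DirectSum.decompose_of_mem_ne 𝒜 m'.2 hj, mul_zero]
      · rw [GradedAlgebra.proj_apply (𝒜 := 𝒜) 2,
          DirectSum.decompose_of_mem_ne 𝒜 hmem (by omega),
          GradedAlgebra.proj_apply (𝒜 := 𝒜) 0 (m : T),
          DirectSum.decompose_of_mem_ne 𝒜 m.2 hi, zero_mul, zero_mul]
    | add x y hx hy => rw [mul_add, map_add, hx, hy, map_add, mul_add]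
  | add x y hx hy => rw [add_mul, add_mul, map_add, hx, hy, map_add, add_mul, add_mul]

end aux

section main
variable {k T : Type*} [Field k] [Ring T] [Algebra k T]
    (𝒜 : ℕ → Submodule k T) [GradedAlgebra 𝒜]

lemma bimod_le_easy {P : Set T} (hP : P ⊆ (filt 𝒜 2 : Set T)) :
    bimodSpan k 𝒜 P ≤ twoSidedSpan k P ⊓ filt 𝒜 2 := by
  apply Submodule.span_le.mpr
  rintro x ⟨a, ha, p, hp, b, hb, rfl⟩
  simp only [SetLike.mem_coe, Submodule.mem_inf]
  refine ⟨Submodule.subset_span ⟨a, b, p, hp, rfl⟩, ?_⟩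
  rw [mem_filt_iff]
  intro i hi
  rw [proj_mul_right0 𝒜 hb, proj_mul_left0 𝒜 ha,
    (mem_filt_iff 𝒜 2 p).mp (hP hp) i hi, mul_zero, zero_mul]

theorem stmt2' {P : Set T} (hP : P ⊆ (filt 𝒜 2 : Set T))
    (hPBW : twoSidedSpan k ((GradedAlgebra.proj 𝒜 2 : T →ₗ[k] T) '' P) =
      twoSidedSpan k (LH 𝒜 '' (twoSidedSpan k P : Set T))) :
    twoSidedSpan k P ⊓ filt 𝒜 2 = bimodSpan k 𝒜 P := by
  classical
  refine le_antisymm ?_ (bimod_le_easy 𝒜 hP)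
  -- every element of the graded ideal J vanishes under low projections
  have hJlow : ∀ d < 2, ∀ z ∈ twoSidedSpan k ((GradedAlgebra.proj 𝒜 2 : T →ₗ[k] T) '' P),
      GradedAlgebra.proj 𝒜 d z = 0 := by
    intro d hd z hz
    have h : twoSidedSpan k ((GradedAlgebra.proj 𝒜 2 : T →ₗ[k] T) '' P) ≤
        LinearMap.ker (GradedAlgebra.proj 𝒜 d) := by
      apply Submodule.span_le.mpr
      rintro x ⟨a, b, q, ⟨p, hp, rfl⟩, rfl⟩
      have hq : GradedAlgebra.proj 𝒜 2 p ∈ 𝒜 2 := by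
        rw [GradedAlgebra.proj_apply]; exact SetLike.coe_mem _
      exact proj_low_aqb 𝒜 hq hd a b
    exact h hz
  -- for every z in J there is y in the bimodule span with the same degree-2 projection
  have hJ2 : ∀ z ∈ twoSidedSpan k ((GradedAlgebra.proj 𝒜 2 : T →ₗ[k] T) '' P),
      ∃ y ∈ bimodSpan k 𝒜 P,
      GradedAlgebra.proj 𝒜 2 y = GradedAlgebra.proj 𝒜 2 z := by
    intro z hz
    induction hz using Submodule.span_induction with
    | mem x hx =>
      obtain ⟨a, b, q, ⟨p, hp, rfl⟩, rfl⟩ := hx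
      have hq : GradedAlgebra.proj 𝒜 2 p ∈ 𝒜 2 := by
        rw [GradedAlgebra.proj_apply]; exact SetLike.coe_mem _
      have ha0 : GradedAlgebra.proj 𝒜 0 a ∈ 𝒜 0 := by
        rw [GradedAlgebra.proj_apply]; exact SetLike.coe_mem _
      have hb0 : GradedAlgebra.proj 𝒜 0 b ∈ 𝒜 0 := by
        rw [GradedAlgebra.proj_apply]; exact SetLike.coe_mem _
      refine ⟨GradedAlgebra.proj 𝒜 0 a * p * GradedAlgebra.proj 𝒜 0 b,
        Submodule.subset_span ⟨_, ha0, p, hp, _, hb0, rfl⟩, ?_⟩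
      rw [proj_two_aqb 𝒜 hq a b, proj_mul_right0 𝒜 hb0, proj_mul_left0 𝒜 ha0]
    | zero => exact ⟨0, Submodule.zero_mem _, by simp⟩
    | add x y _ _ hx hy =>
      obtain ⟨y1, hy1, he1⟩ := hx
      obtain ⟨y2, hy2, he2⟩ := hy
      exact ⟨y1 + y2, Submodule.add_mem _ hy1 hy2, by rw [map_add, map_add, he1, he2]⟩
    | smul c x _ hx =>
      obtain ⟨y1, hy1, he1⟩ := hx
      exact ⟨c • y1, Submodule.smul_mem _ c hy1, by rw [map_smul, map_smul, he1]⟩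
  -- LH of any element of the ideal lies in J
  have hLHJ : ∀ z ∈ twoSidedSpan k P,
      LH 𝒜 z ∈ twoSidedSpan k ((GradedAlgebra.proj 𝒜 2 : T →ₗ[k] T) '' P) := by
    intro z hz
    rw [hPBW]
    exact Submodule.subset_span ⟨1, 1, LH 𝒜 z, ⟨z, hz, rfl⟩, by rw [one_mul, mul_one]⟩
  -- key vanishing: an element of the ideal in F² with zero degree-2 projection is 0
  have hvanish : ∀ z ∈ twoSidedSpan k P, z ∈ filt 𝒜 2 →
      GradedAlgebra.proj 𝒜 2 z = 0 → z = 0 := by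
    intro z hzI hzF hz2
    by_contra hzne
    set S : Set ℕ := {i | GradedAlgebra.proj 𝒜 i z ≠ 0} with hS
    have hSne : S.Nonempty := by
      by_contra hc
      apply hzne
      rw [← DirectSum.sum_support_decompose 𝒜 z]
      apply Finset.sum_eq_zero
      intro i hi
      have hne : GradedAlgebra.proj 𝒜 i z ≠ 0 := by
        simpa [GradedAlgebra.proj_apply, Submodule.coe_eq_zero.not.symm] using
          DFinsupp.mem_support_iff.mp hi
      exact absurd ⟨i, hne⟩ hc
    have hSbdd : BddAbove S := ⟨2, fun i hi => by
      by_contra hc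
      exact hi ((mem_filt_iff 𝒜 2 z).mp hzF i (by omega))⟩
    have hd : sSup S ∈ S := Nat.sSup_mem hSne hSbdd
    have hdle : sSup S ≤ 2 := csSup_le hSne fun i hi => by
      by_contra hc
      exact hi ((mem_filt_iff 𝒜 2 z).mp hzF i (by omega))
    have hdne2 : sSup S ≠ 2 := fun h => hd (h ▸ hz2)
    have hdlt : sSup S < 2 := by omega
    have h0 : GradedAlgebra.proj 𝒜 (sSup S) (LH 𝒜 z) = 0 :=
      hJlow _ hdlt _ (hLHJ z hzI)
    have hmem : LH 𝒜 z ∈ 𝒜 (sSup S) := by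
      rw [LH, GradedAlgebra.proj_apply]; exact SetLike.coe_mem _
    rw [GradedAlgebra.proj_apply, DirectSum.decompose_of_mem_same 𝒜 hmem] at h0
    exact hd h0
  -- the hard inclusion
  intro x hx
  obtain ⟨hxI, hxF⟩ := Submodule.mem_inf.mp hx
  by_cases hx0 : x = 0
  · subst hx0; exact Submodule.zero_mem _
  · obtain ⟨y, hyB, hy2⟩ := hJ2 _ (hLHJ x hxI)
    -- proj 2 (LH x) = proj 2 x
    have hproj : GradedAlgebra.proj 𝒜 2 (LH 𝒜 x) = GradedAlgebra.proj 𝒜 2 x := by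
      set S : Set ℕ := {i | GradedAlgebra.proj 𝒜 i x ≠ 0} with hS
      have hmem : LH 𝒜 x ∈ 𝒜 (sSup S) := by
        rw [LH, GradedAlgebra.proj_apply]; exact SetLike.coe_mem _
      by_cases hd2 : sSup S = 2
      · have hmem2 : LH 𝒜 x ∈ 𝒜 2 := hd2 ▸ hmem
        conv_rhs => rw [show GradedAlgebra.proj 𝒜 2 x = LH 𝒜 x by rw [LH, ← hS, hd2]]
        rw [GradedAlgebra.proj_apply]
        exact DirectSum.decompose_of_mem_same 𝒜 hmem2
      · rw [GradedAlgebra.proj_apply, DirectSum.decompose_of_mem_ne 𝒜 hmem hd2]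
        by_contra hc
        have h2S : (2 : ℕ) ∈ S := fun h => (Ne.symm hc) h
        have hSbdd : BddAbove S := ⟨2, fun i hi => by
          by_contra hcc
          exact hi ((mem_filt_iff 𝒜 2 x).mp hxF i (by omega))⟩
        have h1 : (2 : ℕ) ≤ sSup S := le_csSup hSbdd h2S
        have h2 : sSup S ≤ 2 := csSup_le ⟨2, h2S⟩ fun i hi => by
          by_contra hcc
          exact hi ((mem_filt_iff 𝒜 2 x).mp hxF i (by omega))
        omega
    have hzI : x - y ∈ twoSidedSpan k P :=
      Submodule.sub_mem _ hxI (((bimod_le_easy 𝒜 hP) hyB).1)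
    have hzF : x - y ∈ filt 𝒜 2 :=
      Submodule.sub_mem _ hxF (((bimod_le_easy 𝒜 hP) hyB).2)
    have hz2 : GradedAlgebra.proj 𝒜 2 (x - y) = 0 := by
      rw [map_sub, hy2, hproj, sub_self]
    have hxy : x = y := sub_eq_zero.mp (hvanish _ hzI hzF hz2)
    rw [hxy]; exact hyB

end main

/-- if `P ⊆ F²(T)` is a set of PBW filtered quadratic relations,
then `⟨P⟩ ∩ F²(T) = T⁰ P T⁰`. -/
theorem stmt2 {k T : Type*} [Field k] [Ring T] [Algebra k T]
    (𝒜 : ℕ → Submodule k T) [GradedAlgebra 𝒜]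
    (P : Set T) (hP : P ⊆ (filt 𝒜 2 : Set T))
    (hPBW : twoSidedSpan k ((GradedAlgebra.proj 𝒜 2 : T →ₗ[k] T) '' P) =
      twoSidedSpan k (LH 𝒜 '' (twoSidedSpan k P : Set T))) :
    twoSidedSpan k P ⊓ filt 𝒜 2 = bimodSpan k 𝒜 P :=
  stmt2' 𝒜 hP hPBW
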